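/- arXiv:2002.09936 — 2 statements merged into one kernel-verified Lean document; each statement's English description precedes it below -/
import Mathlib

section
/- Let f = (f_V, {f_{l,v}}) : Γ → Γ' be a morphism of moment graphs on Λ and let ξ = {ξ_v}_{v∈V} be a Γ-monodromy such that whenever v—w is an edge of Γ with f_V(v) ≠ f_V(w), one has ξ_v(l'(f_E(v—w))) ∈ l(v—w)·ℤ. Then the map f^{ξ*} : (z_{v'})_{v'∈V'} ↦ (ξ_v(z_{f_V(v)}))_{v∈V} is a well-defined ring homomorphism from the structure algebra of Γ' to the structure algebra of Γ (both in the multiplicative case, f^{ξ*} : Z_m(Γ') → Z_m(Γ), with ξ_v acting on ℤ[Λ] by e^λ ↦ e^{ξ_v(λ)}, and in the additive case, f^{ξ*} : Z_a(Γ') → Z_a(Γ)). -/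
noncomputable section

/-- A moment graph on a lattice `Λ`: a poset of vertices (the order given as a
relation with axioms), a set of directed edges `E ⊆ V × V`, and a label function
assigning to each edge a nonzero element of `Λ`, such that edges respect the
order and are not loops. -/
structure MomentGraph (Λ : Type*) [AddCommGroup Λ] (V : Type*) where
  le : V → V → Prop
  le_refl : ∀ v, le v v
  le_trans : ∀ u v w, le u v → le v w → le u w
  le_antisymm : ∀ v w, le v w → le w v → v = w
  E : V → V → Prop
  label : V → V → Λ
  label_ne_zero : ∀ {v w}, E v w → label v w ≠ 0
  le_of_E : ∀ {v w}, E v w → le v w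
  ne_of_E : ∀ {v w}, E v w → v ≠ w

namespace MomentGraph

variable {Λ : Type*} [AddCommGroup Λ] {V V' : Type*}

/-- Underlying (unoriented) adjacency `v — w`. -/
def Adj (G : MomentGraph Λ V) (v w : V) : Prop := G.E v w ∨ G.E w v

open Classical in
/-- The label of the unoriented edge `v — w` (there are no multiple edges, so this
is well defined on adjacent pairs). -/
def albl (G : MomentGraph Λ V) (v w : V) : Λ := if G.E v w then G.label v w else G.label w v

/-- A morphism of moment graphs on the same lattice `Λ` (Definition 2.3):
a poset morphism on vertices sending edges to edges or collapsing them (MR1),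
together with a `ℤ`-linear automorphism of `Λ` for every vertex satisfying
(MR2)(a) and (MR2)(b). -/
structure Hom (G : MomentGraph Λ V) (G' : MomentGraph Λ V') where
  toFun : V → V'
  mono : ∀ {v w}, G.le v w → G'.le (toFun v) (toFun w)
  adj : ∀ {v w}, G.Adj v w → G'.Adj (toFun v) (toFun w) ∨ toFun v = toFun w
  aut : V → (Λ ≃ₗ[ℤ] Λ)
  label_pm : ∀ {v w}, G.Adj v w → toFun v ≠ toFun w →
      aut v (G.albl v w) = G'.albl (toFun v) (toFun w) ∨
      aut v (G.albl v w) = - G'.albl (toFun v) (toFun w)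
  compat : ∀ {v w}, G.Adj v w → toFun v ≠ toFun w → ∀ μ : Λ,
      ∃ n : ℤ, aut v μ - aut w μ = n • G'.albl (toFun v) (toFun w)

/-- A morphism of moment graphs is an isomorphism if it has a two-sided inverse
morphism, inverting both the vertex map and the label automorphisms. -/
def Hom.IsIso {G : MomentGraph Λ V} {G' : MomentGraph Λ V'} (f : G.Hom G') : Prop :=
  ∃ g : G'.Hom G, (∀ v, g.toFun (f.toFun v) = v) ∧ (∀ v', f.toFun (g.toFun v') = v') ∧
    ∀ v (μ : Λ), g.aut (f.toFun v) (f.aut v μ) = μ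

/-- A `Γ`-monodromy: a collection of lattice automorphisms `ξ_v` with
`ξ_v(λ) - ξ_w(λ) ∈ l(v → w)·ℤ` for all edges `v → w`. -/
def Monodromy (G : MomentGraph Λ V) (ξ : V → (Λ ≃ₗ[ℤ] Λ)) : Prop :=
  ∀ {v w}, G.E v w → ∀ μ : Λ, ∃ n : ℤ, ξ v μ - ξ w μ = n • G.label v w

/-- A `Γ`-compatible equivalence relation (EQV1) and (EQV2). -/
def Compatible (G : MomentGraph Λ V) (s : Setoid V) : Prop :=
  (∀ ⦃v w u⦄, s.r v w → G.le v u → G.le u w → s.r v u) ∧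
  (∀ ⦃v₁ w₁⦄, G.E v₁ w₁ → ¬ s.r v₁ w₁ → ∀ v₂, s.r v₂ v₁ →
    (∃! w₂, s.r w₂ w₁ ∧ G.E v₂ w₂) ∧
    (∀ w₂, s.r w₂ w₁ → G.E v₂ w₂ → G.label v₂ w₂ = G.label v₁ w₁))

/-- Edges of the quotient graph: `[v] → [w]` iff `v ≁ w` and there are
representatives joined by an edge. -/
def QE (G : MomentGraph Λ V) (s : Setoid V) (a b : Quotient s) : Prop :=
  a ≠ b ∧ ∃ v w, Quotient.mk s v = a ∧ Quotient.mk s w = b ∧ G.E v w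

open Classical in
/-- The label of a quotient edge, via a choice of representatives. -/
def Qlabel (G : MomentGraph Λ V) (s : Setoid V) (a b : Quotient s) : Λ :=
  if h : ∃ v, ∃ w, Quotient.mk s v = a ∧ Quotient.mk s w = b ∧ G.E v w
  then G.label h.choose h.choose_spec.choose else 0

/-- The covering relation of the vertex poset. -/
def cov (G : MomentGraph Λ V) (v w : V) : Prop :=
  G.le v w ∧ v ≠ w ∧ ∀ u, G.le v u → G.le u w → u = v ∨ u = w

/-- A special matching of the vertex poset (Definition of Brenti): a bijection `M`
such that `M(v)` covers or is covered by `v`, and if `M(v) ≠ w` and `v ⋖ w`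
then `M(v) ≤ M(w)`. -/
def SpecialMatching (G : MomentGraph Λ V) (M : V → V) : Prop :=
  Function.Bijective M ∧ (∀ v, G.cov (M v) v ∨ G.cov v (M v)) ∧
  (∀ v w, M v ≠ w → G.cov v w → G.le (M v) (M w))

end MomentGraph

noncomputable section StructureAlgebras

/-- The generic "structure algebra" construction: given an edge relation `E` on `V`
and an `A`-valued function `lab` (the image of the label of each edge in `A`),
this is the subalgebra of `∏_{v ∈ V} A` of tuples `(z_v)` with
`z_v - z_w ∈ lab v w · A` for every edge `v → w`, with coordinate-wise operations
and with `A` acting diagonally. -/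
def structAlg {V : Type*} {A : Type*} [CommRing A] (E : V → V → Prop) (lab : V → V → A) :
    Subalgebra A (V → A) where
  carrier := {z | ∀ ⦃v w⦄, E v w → ∃ t, z v - z w = lab v w * t}
  mul_mem' := by
    intro a b ha hb v w h
    obtain ⟨t, ht⟩ := ha h
    obtain ⟨t', ht'⟩ := hb h
    refine ⟨a v * t' + t * b w, ?_⟩
    simp only [Pi.mul_apply]
    linear_combination a v * ht' + b w * ht
  one_mem' := by intro v w h; exact ⟨0, by simp⟩
  add_mem' := by
    intro a b ha hb v w h
    obtain ⟨t, ht⟩ := ha h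
    obtain ⟨t', ht'⟩ := hb h
    refine ⟨t + t', ?_⟩
    simp only [Pi.add_apply]
    linear_combination ht + ht'
  zero_mem' := by intro v w h; exact ⟨0, by simp⟩
  algebraMap_mem' := by
    intro r v w h
    exact ⟨0, by simp⟩

set_option synthInstance.maxHeartbeats 4000000 in
instance structAlgAddCommGroup {V A : Type*} [CommRing A] (E : V → V → Prop)
    (lab : V → V → A) : AddCommGroup (structAlg E lab) :=
  inferInstance

set_option synthInstance.maxHeartbeats 4000000 in
instance structAlgModule {V A : Type*} [CommRing A] (E : V → V → Prop)
    (lab : V → V → A) : Module A (structAlg E lab) :=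
  inferInstance

/-- The group ring `ℤ[Λ]`. -/
abbrev GrpRing (Λ : Type*) [AddCommGroup Λ] := AddMonoidAlgebra ℤ Λ

variable {Λ : Type*} [AddCommGroup Λ]

/-- The basis element `e^μ` of the group ring `ℤ[Λ]`. -/
def grExp (μ : Λ) : GrpRing Λ := AddMonoidAlgebra.single μ 1

/-- The element `x_μ = 1 - e^{-μ}` of the group ring `ℤ[Λ]`. -/
def grX (μ : Λ) : GrpRing Λ := 1 - grExp (-μ)

/-- The augmentation `ℤ[Λ] → ℤ`, `e^λ ↦ 1`. -/
def grAug (Λ : Type*) [AddCommGroup Λ] : GrpRing Λ →+* ℤ :=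
  ((AddMonoidAlgebra.lift ℤ ℤ Λ) 1).toRingHom

/-- The augmentation ideal `I_m ⊂ ℤ[Λ]`. -/
def Im (Λ : Type*) [AddCommGroup Λ] : Ideal (GrpRing Λ) := RingHom.ker (grAug Λ)

/-- The multiplicative structure algebra of edge data `(E, lab)`:
tuples `(z_v)` of elements of `ℤ[Λ]` with `z_v - z_w ∈ x_{lab v w}·ℤ[Λ]`
for all edges. -/
abbrev ZmOf {V : Type*} (E : V → V → Prop) (lab : V → V → Λ) :
    Subalgebra (GrpRing Λ) (V → GrpRing Λ) :=
  structAlg E fun v w => grX (lab v w)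

/-- The multiplicative structure algebra `Z_m(Γ)` of a moment graph. -/
abbrev MomentGraph.Zm {V : Type*} (G : MomentGraph Λ V) :
    Subalgebra (GrpRing Λ) (V → GrpRing Λ) :=
  ZmOf G.E G.label

/-- Index type of a chosen basis of the lattice `Λ`. -/
abbrev bIdx (Λ : Type*) [AddCommGroup Λ] [Module.Free ℤ Λ] [Module.Finite ℤ Λ] :=
  Module.Free.ChooseBasisIndex ℤ Λ

/-- A model of the symmetric algebra `S^*(Λ)` over `ℤ`: the polynomial ring on a
basis of `Λ`. -/
abbrev SymZ (Λ : Type*) [AddCommGroup Λ] [Module.Free ℤ Λ] [Module.Finite ℤ Λ] :=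
  MvPolynomial (bIdx Λ) ℤ

variable [Module.Free ℤ Λ] [Module.Finite ℤ Λ]

/-- The canonical embedding `Λ → S^*(Λ)` (degree-one part). -/
def iotaZ (Λ : Type*) [AddCommGroup Λ] [Module.Free ℤ Λ] [Module.Finite ℤ Λ] :
    Λ →ₗ[ℤ] SymZ Λ :=
  (Finsupp.linearCombination ℤ fun i => (MvPolynomial.X i : SymZ Λ)).comp
    (Module.Free.chooseBasis ℤ Λ).repr.toLinearMap

/-- The additive structure algebra of edge data `(E, lab)`:
tuples `(z_v)` of elements of `S^*(Λ)` with `z_v - z_w ∈ l(v→w)·S^*(Λ)`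
for all edges. -/
abbrev ZaOf {V : Type*} (E : V → V → Prop) (lab : V → V → Λ) :
    Subalgebra (SymZ Λ) (V → SymZ Λ) :=
  structAlg E fun v w => iotaZ Λ (lab v w)

/-- The additive structure algebra `Z_a(Γ)` of a moment graph. -/
abbrev MomentGraph.Za {V : Type*} (G : MomentGraph Λ V) :
    Subalgebra (SymZ Λ) (V → SymZ Λ) :=
  ZaOf G.E G.label

end StructureAlgebras

noncomputable section Statements
open MomentGraph
variable {Λ : Type*} [AddCommGroup Λ] [Module.Free ℤ Λ] [Module.Finite ℤ Λ]
variable {V V' : Type*}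


section MyHelpers

variable {Λ₀ : Type*} [AddCommGroup Λ₀]

lemma my_grExp_add (a b : Λ₀) : grExp (a + b) = grExp a * grExp b := by
  simp [grExp, AddMonoidAlgebra.single_mul_single]

lemma my_grExp_zero : grExp (0 : Λ₀) = 1 := rfl

lemma my_grX_dvd_one_sub (l : Λ₀) : grX l ∣ (1 - grExp l) := by
  refine ⟨-grExp l, ?_⟩
  have h : grExp (-l) * grExp l = 1 := by
    rw [← my_grExp_add, neg_add_cancel, my_grExp_zero]
  simp only [grX]
  ring_nf
  linear_combination -h

lemma my_grX_dvd_zsmul (l : Λ₀) (n : ℤ) : grX l ∣ (1 - grExp (n • l)) := by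
  induction n using Int.induction_on with
  | zero => simp [my_grExp_zero]
  | succ k ih =>
      have he : grExp (((k : ℤ) + 1) • l) = grExp ((k : ℤ) • l) * grExp l := by
        rw [← my_grExp_add, add_smul, one_smul]
      have step : 1 - grExp (((k : ℤ) + 1) • l)
          = (1 - grExp ((k : ℤ) • l)) + grExp ((k : ℤ) • l) * (1 - grExp l) := by
        rw [he]; ring
      rw [step]
      exact dvd_add ih (Dvd.dvd.mul_left (my_grX_dvd_one_sub l) _)
  | pred k ih =>
      have he : grExp ((-(k : ℤ) - 1) • l) * grExp l = grExp ((-(k : ℤ)) • l) := by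
        rw [← my_grExp_add]
        congr 1
        rw [sub_smul, one_smul]
        abel
      have hinv : grX l = grExp (-l) * (grExp l - 1) := by
        have h : grExp (-l) * grExp l = 1 := by
          rw [← my_grExp_add, neg_add_cancel, my_grExp_zero]
        simp only [grX]; linear_combination -h
      have step : 1 - grExp ((-(k : ℤ) - 1) • l)
          = (1 - grExp ((-(k : ℤ)) • l)) + grExp ((-(k : ℤ) - 1) • l) * (grExp l - 1) := by
        linear_combination -he
      rw [step]
      refine dvd_add ih ?_
      refine Dvd.dvd.mul_left ?_ _
      -- grX l ∣ grExp l - 1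
      obtain ⟨c, hc⟩ := my_grX_dvd_one_sub (Λ₀ := Λ₀) l
      exact ⟨-c, by linear_combination -hc⟩

lemma my_grX_dvd_sub_exp {l a b : Λ₀} {n : ℤ} (h : a - b = n • l) :
    grX l ∣ grExp a - grExp b := by
  have hab : grExp a = grExp b * grExp (n • l) := by
    rw [← h, ← my_grExp_add]
    congr 1
    abel
  have step : grExp a - grExp b = (-grExp b) * (1 - grExp (n • l)) := by
    rw [hab]; ring
  rw [step]
  exact Dvd.dvd.mul_left (my_grX_dvd_zsmul l n) _

lemma my_gx_span (ξv ξw : Λ₀ ≃ₗ[ℤ] Λ₀) (gv gw : GrpRing Λ₀ →+* GrpRing Λ₀)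
    (hgv : ∀ μ, gv (grExp μ) = grExp (ξv μ)) (hgw : ∀ μ, gw (grExp μ) = grExp (ξw μ))
    (l : Λ₀) (hd : ∀ μ : Λ₀, ∃ n : ℤ, ξv μ - ξw μ = n • l) (a : GrpRing Λ₀) :
    grX l ∣ gv a - gw a := by
  induction a using AddMonoidAlgebra.induction_linear with
  | zero => simp
  | add p q hp hq =>
      have : gv (p + q) - gw (p + q) = (gv p - gw p) + (gv q - gw q) := by
        rw [map_add, map_add]; ring
      rw [this]; exact dvd_add hp hq
  | single μ c =>
      have hs : (AddMonoidAlgebra.single μ c : GrpRing Λ₀) = c • grExp μ := by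
        simp [grExp]
      rw [show (AddMonoidAlgebra.single μ c : GrpRing Λ₀) = c • grExp μ from hs,
        map_zsmul, map_zsmul, hgv, hgw, ← smul_sub, zsmul_eq_mul]
      exact Dvd.dvd.mul_left (my_grX_dvd_sub_exp (hd μ).choose_spec) _

lemma my_gx_grX (ξv : Λ₀ ≃ₗ[ℤ] Λ₀) (gv : GrpRing Λ₀ →+* GrpRing Λ₀)
    (hgv : ∀ μ, gv (grExp μ) = grExp (ξv μ)) (μ : Λ₀) :
    gv (grX μ) = grX (ξv μ) := by
  simp only [grX, map_sub, map_one, hgv, map_neg]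

variable {Λ : Type*} [AddCommGroup Λ] [Module.Free ℤ Λ] [Module.Finite ℤ Λ]

lemma my_iotaZ_basis (i : bIdx Λ) :
    iotaZ Λ (Module.Free.chooseBasis ℤ Λ i) = MvPolynomial.X i := by
  simp [iotaZ]

lemma my_sx_span (ξv ξw : Λ ≃ₗ[ℤ] Λ) (sv sw : SymZ Λ →+* SymZ Λ)
    (hsv : ∀ μ, sv (iotaZ Λ μ) = iotaZ Λ (ξv μ)) (hsw : ∀ μ, sw (iotaZ Λ μ) = iotaZ Λ (ξw μ))
    (l : Λ) (hd : ∀ μ : Λ, ∃ n : ℤ, ξv μ - ξw μ = n • l) (a : SymZ Λ) :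
    iotaZ Λ l ∣ sv a - sw a := by
  induction a using MvPolynomial.induction_on with
  | C c =>
      rw [eq_intCast (MvPolynomial.C : ℤ →+* SymZ Λ) c,
        map_intCast, map_intCast, sub_self]
      exact dvd_zero _
  | add p q hp hq =>
      have : sv (p + q) - sw (p + q) = (sv p - sw p) + (sv q - sw q) := by
        rw [map_add, map_add]; ring
      rw [this]; exact dvd_add hp hq
  | mul_X p i hp =>
      have hXv : sv (MvPolynomial.X i) = iotaZ Λ (ξv (Module.Free.chooseBasis ℤ Λ i)) := by
        rw [← my_iotaZ_basis, hsv]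
      have hXw : sw (MvPolynomial.X i) = iotaZ Λ (ξw (Module.Free.chooseBasis ℤ Λ i)) := by
        rw [← my_iotaZ_basis, hsw]
      obtain ⟨n, hn⟩ := hd (Module.Free.chooseBasis ℤ Λ i)
      have hXd : iotaZ Λ l ∣ sv (MvPolynomial.X i) - sw (MvPolynomial.X i) := by
        rw [hXv, hXw, ← map_sub, hn, map_smul, zsmul_eq_mul]
        exact Dvd.dvd.mul_left dvd_rfl _
      have key : sv (p * MvPolynomial.X i) - sw (p * MvPolynomial.X i)
          = sv p * (sv (MvPolynomial.X i) - sw (MvPolynomial.X i))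
            + (sv p - sw p) * sw (MvPolynomial.X i) := by
        rw [map_mul, map_mul]; ring
      rw [key]
      exact dvd_add (Dvd.dvd.mul_left hXd _) (Dvd.dvd.mul_right hp _)

end MyHelpers

theorem stmt5 (G : MomentGraph Λ V) (G' : MomentGraph Λ V') (f : G.Hom G')
    (ξ : V → (Λ ≃ₗ[ℤ] Λ)) (hmon : G.Monodromy ξ)
    (htw : ∀ v w, G.Adj v w → f.toFun v ≠ f.toFun w →
      ∃ n : ℤ, ξ v (G'.albl (f.toFun v) (f.toFun w)) = n • G.albl v w)
    (gξ : V → (GrpRing Λ →+* GrpRing Λ))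
    (hgξ : ∀ v (μ : Λ), gξ v (grExp μ) = grExp (ξ v μ))
    (sξ : V → (SymZ Λ →+* SymZ Λ))
    (hsξ : ∀ v (μ : Λ), sξ v (iotaZ Λ μ) = iotaZ Λ (ξ v μ)) :
    (∃ Φ : G'.Zm →+* G.Zm, ∀ (z : G'.Zm) (v : V),
        (Φ z : V → GrpRing Λ) v = gξ v ((z : V' → GrpRing Λ) (f.toFun v))) ∧
    (∃ Ψ : G'.Za →+* G.Za, ∀ (z : G'.Za) (v : V),
        (Ψ z : V → SymZ Λ) v = sξ v ((z : V' → SymZ Λ) (f.toFun v))) := by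
  classical
  have hlblG : ∀ v w, G.E v w → G.albl v w = G.label v w := by
    intro v w h; rw [albl, if_pos h]
  constructor
  · -- multiplicative case
    have hmem : ∀ z : G'.Zm, (fun v => gξ v ((z : V' → GrpRing Λ) (f.toFun v))) ∈ G.Zm := by
      intro z
      show ∀ ⦃v w⦄, G.E v w → ∃ t, gξ v ((z : V' → GrpRing Λ) (f.toFun v)) -
        gξ w ((z : V' → GrpRing Λ) (f.toFun w)) = grX (G.label v w) * t
      intro v w hE
      have key : grX (G.label v w) ∣
          gξ v ((z : V' → GrpRing Λ) (f.toFun v)) - gξ w ((z : V' → GrpRing Λ) (f.toFun w)) := by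
        by_cases heq : f.toFun v = f.toFun w
        · rw [heq]
          exact my_gx_span (ξ v) (ξ w) (gξ v) (gξ w) (hgξ v) (hgξ w) _
            (fun μ => hmon hE μ) _
        · have hadj : G.Adj v w := Or.inl hE
          have hadj' : G'.Adj (f.toFun v) (f.toFun w) := (f.adj hadj).resolve_right heq
          have hzd : grX (G'.albl (f.toFun v) (f.toFun w)) ∣
              (z : V' → GrpRing Λ) (f.toFun v) - (z : V' → GrpRing Λ) (f.toFun w) := by
            by_cases h : G'.E (f.toFun v) (f.toFun w)
            · obtain ⟨t, ht⟩ := z.2 h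
              exact ⟨t, by rw [albl, if_pos h]; exact ht⟩
            · have h' : G'.E (f.toFun w) (f.toFun v) := hadj'.resolve_left h
              obtain ⟨t, ht⟩ := z.2 h'
              refine ⟨-t, ?_⟩
              rw [albl, if_neg h]
              linear_combination -ht
          obtain ⟨n, hn⟩ := htw v w hadj heq
          obtain ⟨t, ht⟩ := hzd
          have h1 : gξ v ((z : V' → GrpRing Λ) (f.toFun v)) -
              gξ v ((z : V' → GrpRing Λ) (f.toFun w))
              = grX (ξ v (G'.albl (f.toFun v) (f.toFun w))) * gξ v t := by
            rw [← my_gx_grX (ξ v) (gξ v) (hgξ v), ← map_mul, ← ht, map_sub]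
          have h3 : grX (G.label v w) ∣ grX (ξ v (G'.albl (f.toFun v) (f.toFun w))) := by
            rw [hn, hlblG v w hE]
            have h4 := my_grX_dvd_zsmul (G.label v w) (-n)
            simpa [grX, neg_smul] using h4
          have hfirst : grX (G.label v w) ∣ gξ v ((z : V' → GrpRing Λ) (f.toFun v)) -
              gξ v ((z : V' → GrpRing Λ) (f.toFun w)) := by
            rw [h1]; exact Dvd.dvd.mul_right h3 _
          have hsecond : grX (G.label v w) ∣ gξ v ((z : V' → GrpRing Λ) (f.toFun w)) -
              gξ w ((z : V' → GrpRing Λ) (f.toFun w)) :=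
            my_gx_span (ξ v) (ξ w) (gξ v) (gξ w) (hgξ v) (hgξ w) _
              (fun μ => hmon hE μ) _
          have hsum := dvd_add hfirst hsecond
          rwa [sub_add_sub_cancel] at hsum
      obtain ⟨t, ht⟩ := key
      exact ⟨t, ht⟩
    refine ⟨RingHom.codRestrict
      ((Pi.ringHom (fun v => (gξ v).comp (Pi.evalRingHom (fun _ : V' => GrpRing Λ) (f.toFun v)))).comp
        (Subalgebra.val G'.Zm).toRingHom) G.Zm (fun z => hmem z), fun z v => rfl⟩
  · -- additive case
    have hmem : ∀ z : G'.Za, (fun v => sξ v ((z : V' → SymZ Λ) (f.toFun v))) ∈ G.Za := by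
      intro z
      show ∀ ⦃v w⦄, G.E v w → ∃ t, sξ v ((z : V' → SymZ Λ) (f.toFun v)) -
        sξ w ((z : V' → SymZ Λ) (f.toFun w)) = iotaZ Λ (G.label v w) * t
      intro v w hE
      have key : iotaZ Λ (G.label v w) ∣
          sξ v ((z : V' → SymZ Λ) (f.toFun v)) - sξ w ((z : V' → SymZ Λ) (f.toFun w)) := by
        by_cases heq : f.toFun v = f.toFun w
        · rw [heq]
          exact my_sx_span (ξ v) (ξ w) (sξ v) (sξ w) (hsξ v) (hsξ w) _
            (fun μ => hmon hE μ) _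
        · have hadj : G.Adj v w := Or.inl hE
          have hadj' : G'.Adj (f.toFun v) (f.toFun w) := (f.adj hadj).resolve_right heq
          have hzd : iotaZ Λ (G'.albl (f.toFun v) (f.toFun w)) ∣
              (z : V' → SymZ Λ) (f.toFun v) - (z : V' → SymZ Λ) (f.toFun w) := by
            by_cases h : G'.E (f.toFun v) (f.toFun w)
            · obtain ⟨t, ht⟩ := z.2 h
              exact ⟨t, by rw [albl, if_pos h]; exact ht⟩
            · have h' : G'.E (f.toFun w) (f.toFun v) := hadj'.resolve_left h
              obtain ⟨t, ht⟩ := z.2 h'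
              refine ⟨-t, ?_⟩
              rw [albl, if_neg h]
              linear_combination -ht
          obtain ⟨n, hn⟩ := htw v w hadj heq
          obtain ⟨t, ht⟩ := hzd
          have h1 : sξ v ((z : V' → SymZ Λ) (f.toFun v)) -
              sξ v ((z : V' → SymZ Λ) (f.toFun w))
              = iotaZ Λ (ξ v (G'.albl (f.toFun v) (f.toFun w))) * sξ v t := by
            rw [← hsξ v, ← map_mul, ← ht, map_sub]
          have h3 : iotaZ Λ (G.label v w) ∣ iotaZ Λ (ξ v (G'.albl (f.toFun v) (f.toFun w))) := by
            rw [hn, hlblG v w hE, map_zsmul, zsmul_eq_mul]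
            exact Dvd.dvd.mul_left dvd_rfl _
          have hfirst : iotaZ Λ (G.label v w) ∣ sξ v ((z : V' → SymZ Λ) (f.toFun v)) -
              sξ v ((z : V' → SymZ Λ) (f.toFun w)) := by
            rw [h1]; exact Dvd.dvd.mul_right h3 _
          have hsecond : iotaZ Λ (G.label v w) ∣ sξ v ((z : V' → SymZ Λ) (f.toFun w)) -
              sξ w ((z : V' → SymZ Λ) (f.toFun w)) :=
            my_sx_span (ξ v) (ξ w) (sξ v) (sξ w) (hsξ v) (hsξ w) _
              (fun μ => hmon hE μ) _
          have hsum := dvd_add hfirst hsecond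
          rwa [sub_add_sub_cancel] at hsum
      obtain ⟨t, ht⟩ := key
      exact ⟨t, ht⟩
    refine ⟨RingHom.codRestrict
      ((Pi.ringHom (fun v => (sξ v).comp (Pi.evalRingHom (fun _ : V' => SymZ Λ) (f.toFun v)))).comp
        (Subalgebra.val G'.Za).toRingHom) G.Za (fun z => hmem z), fun z v => rfl⟩

end Statements
end
end

section
/- Let Γ be a moment graph on Λ, ξ = {ξ_v} a Γ-monodromy, and i ≥ 0. Each ξ_v induces an automorphism of S^{≤i}_ℚ(Λ), and the truncated additive ξ-characteristic map c^ξ : S^{≤i}_ℚ(Λ) → Z_a^{≤i}(Γ)_ℚ, z ↦ (ξ_v(z))_{v∈V}, is well defined. Then the localized Chern character respects the ξ-characteristic maps: c^ξ ∘ ch_i = cch_i ∘ c^ξ as maps ℤ[Λ] → Z_a^{≤i}(Γ)_ℚ, where on the right c^ξ : ℤ[Λ] → Z_m(Γ) is the multiplicative ξ-characteristic map z ↦ (ξ_v(z))_v (with ξ_v acting on ℤ[Λ] by e^λ ↦ e^{ξ_v(λ)}). -/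
noncomputable section

noncomputable section Chern

variable {Λ : Type*} [AddCommGroup Λ] [Module.Free ℤ Λ] [Module.Finite ℤ Λ]

/-- A model of the rational symmetric algebra `S^*(Λ) ⊗ ℚ`. -/
abbrev SymQ (Λ : Type*) [AddCommGroup Λ] [Module.Free ℤ Λ] [Module.Finite ℤ Λ] :=
  MvPolynomial (bIdx Λ) ℚ

/-- The canonical embedding `Λ → S^*(Λ) ⊗ ℚ`. -/
def iotaQ (Λ : Type*) [AddCommGroup Λ] [Module.Free ℤ Λ] [Module.Finite ℤ Λ] :
    Λ →ₗ[ℤ] SymQ Λ :=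
  (Finsupp.linearCombination ℤ fun i => (MvPolynomial.X i : SymQ Λ)).comp
    (Module.Free.chooseBasis ℤ Λ).repr.toLinearMap

/-- The augmentation ideal `I_a` of the rational symmetric algebra: the kernel of
the ring homomorphism sending every `λ ∈ Λ` to `0`. -/
def IaQ (Λ : Type*) [AddCommGroup Λ] [Module.Free ℤ Λ] [Module.Finite ℤ Λ] :
    Ideal (SymQ Λ) :=
  RingHom.ker (MvPolynomial.constantCoeff : SymQ Λ →+* ℚ)

/-- The truncated rational symmetric algebra `S^{≤ i}_ℚ(Λ) = (S^*(Λ)/I_a^{i+1}) ⊗ ℚ`. -/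
abbrev STrunc (Λ : Type*) [AddCommGroup Λ] [Module.Free ℤ Λ] [Module.Finite ℤ Λ] (i : ℕ) :=
  SymQ Λ ⧸ (IaQ Λ) ^ (i + 1)

/-- The quotient map `S^*_ℚ(Λ) → S^{≤ i}_ℚ(Λ)`. -/
def trMk (Λ : Type*) [AddCommGroup Λ] [Module.Free ℤ Λ] [Module.Finite ℤ Λ] (i : ℕ) :
    SymQ Λ →+* STrunc Λ i :=
  Ideal.Quotient.mk _

/-- The truncated exponential `Σ_{j ≤ i} μ^j/j!` in `S^{≤ i}_ℚ(Λ)`. -/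
def texp (Λ : Type*) [AddCommGroup Λ] [Module.Free ℤ Λ] [Module.Finite ℤ Λ]
    (i : ℕ) (μ : Λ) : STrunc Λ i :=
  ∑ j ∈ Finset.range (i + 1), (j.factorial : ℚ)⁻¹ • (trMk Λ i (iotaQ Λ μ)) ^ j

/-- The truncated rational additive structure algebra of edge data `(E, lab)`. -/
abbrev ZatOf {V : Type*} (i : ℕ) (E : V → V → Prop) (lab : V → V → Λ) :
    Subalgebra (STrunc Λ i) (V → STrunc Λ i) :=
  structAlg E fun v w => trMk Λ i (iotaQ Λ (lab v w))

/-- The truncated rational additive structure algebra `Z_a^{≤ i}(Γ)_ℚ`. -/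
abbrev MomentGraph.Zat {V : Type*} (G : MomentGraph Λ V) (i : ℕ) :
    Subalgebra (STrunc Λ i) (V → STrunc Λ i) :=
  ZatOf i G.E G.label

end Chern

noncomputable section Statements
open MomentGraph
variable {Λ : Type*} [AddCommGroup Λ] [Module.Free ℤ Λ] [Module.Finite ℤ Λ]
variable {V V' : Type*}


section Aux13
open MvPolynomial
variable {Λ : Type*} [AddCommGroup Λ] [Module.Free ℤ Λ] [Module.Finite ℤ Λ]

lemma iotaQ_basis13 (j : bIdx Λ) :
    iotaQ Λ (Module.Free.chooseBasis ℤ Λ j) = (X j : SymQ Λ) := by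
  simp [iotaQ]

/-- The `ℚ`-algebra endomorphism of `SymQ Λ` induced by `ζ : Λ →ₗ[ℤ] Λ`. -/
def symAut13 (ζ : Λ →ₗ[ℤ] Λ) : SymQ Λ →ₐ[ℚ] SymQ Λ :=
  aeval fun j => iotaQ Λ (ζ (Module.Free.chooseBasis ℤ Λ j))

lemma symAut13_X (ζ : Λ →ₗ[ℤ] Λ) (j : bIdx Λ) :
    symAut13 ζ (X j) = iotaQ Λ (ζ (Module.Free.chooseBasis ℤ Λ j)) := by
  simp [symAut13]

lemma symAut13_iotaQ (ζ : Λ →ₗ[ℤ] Λ) (μ : Λ) :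
    symAut13 ζ (iotaQ Λ μ) = iotaQ Λ (ζ μ) := by
  have h : (((symAut13 ζ).toLinearMap.restrictScalars ℤ).comp (iotaQ Λ) : Λ →ₗ[ℤ] SymQ Λ)
      = (iotaQ Λ).comp ζ := by
    apply Module.Basis.ext (Module.Free.chooseBasis ℤ Λ)
    intro j
    simp [iotaQ_basis13, symAut13_X]
  exact LinearMap.congr_fun h μ

lemma symAut13_C (ζ : Λ →ₗ[ℤ] Λ) (r : ℚ) :
    symAut13 ζ (C r) = C r := by
  simp [symAut13, aeval_C]

lemma constantCoeff_iotaQ13 (μ : Λ) :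
    constantCoeff (iotaQ Λ μ) = 0 := by
  simp [iotaQ, Finsupp.linearCombination_apply, Finsupp.sum, map_sum, map_zsmul]

lemma constantCoeff_symAut13 (ζ : Λ →ₗ[ℤ] Λ) (p : SymQ Λ) :
    constantCoeff (symAut13 ζ p) = constantCoeff p := by
  have h : (constantCoeff.comp (symAut13 ζ).toRingHom : SymQ Λ →+* ℚ) = constantCoeff := by
    apply ringHom_ext
    · intro q; simp [symAut13_C]
    · intro j; simp [symAut13_X, constantCoeff_iotaQ13]
  exact RingHom.congr_fun h p

/-- The algebra automorphism of `SymQ Λ` induced by a lattice automorphism. -/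
def symEquiv13 (ζ : Λ ≃ₗ[ℤ] Λ) : SymQ Λ ≃ₐ[ℚ] SymQ Λ :=
  AlgEquiv.ofAlgHom (symAut13 ζ.toLinearMap) (symAut13 ζ.symm.toLinearMap)
    (by
      apply algHom_ext
      intro j
      rw [AlgHom.comp_apply, AlgHom.id_apply, ← iotaQ_basis13 j, symAut13_iotaQ, symAut13_iotaQ]
      simp)
    (by
      apply algHom_ext
      intro j
      rw [AlgHom.comp_apply, AlgHom.id_apply, ← iotaQ_basis13 j, symAut13_iotaQ, symAut13_iotaQ]
      simp)

lemma symEquiv13_apply (ζ : Λ ≃ₗ[ℤ] Λ) (p : SymQ Λ) :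
    symEquiv13 ζ p = symAut13 ζ.toLinearMap p := rfl

lemma symEquiv13_symm_apply (ζ : Λ ≃ₗ[ℤ] Λ) (p : SymQ Λ) :
    (symEquiv13 ζ).symm p = symAut13 ζ.symm.toLinearMap p := rfl

lemma map_IaQ13 (ζ : Λ ≃ₗ[ℤ] Λ) :
    (IaQ Λ).map (((symEquiv13 ζ : SymQ Λ ≃+* SymQ Λ) : SymQ Λ →+* SymQ Λ)) = IaQ Λ := by
  apply _root_.le_antisymm
  · rw [Ideal.map_le_iff_le_comap]
    intro x hx
    have hx' : constantCoeff x = 0 := hx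
    show constantCoeff _ = 0
    rw [show (((symEquiv13 ζ : SymQ Λ ≃+* SymQ Λ) : SymQ Λ →+* SymQ Λ)) x
        = symAut13 ζ.toLinearMap x from rfl, constantCoeff_symAut13, hx']
  · intro x hx
    have hx' : (symEquiv13 ζ).symm x ∈ IaQ Λ := by
      have hx0 : constantCoeff x = 0 := hx
      show constantCoeff _ = 0
      rw [symEquiv13_symm_apply, constantCoeff_symAut13, hx0]
    have h := Ideal.mem_map_of_mem
      (((symEquiv13 ζ : SymQ Λ ≃+* SymQ Λ) : SymQ Λ →+* SymQ Λ)) hx'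
    have h2 : (((symEquiv13 ζ : SymQ Λ ≃+* SymQ Λ) : SymQ Λ →+* SymQ Λ))
        ((symEquiv13 ζ).symm x) = x := (symEquiv13 ζ).apply_symm_apply x
    rwa [h2] at h

lemma map_IaQpow13 (ζ : Λ ≃ₗ[ℤ] Λ) (n : ℕ) :
    (IaQ Λ ^ n).map (((symEquiv13 ζ : SymQ Λ ≃+* SymQ Λ) : SymQ Λ →+* SymQ Λ)) = IaQ Λ ^ n := by
  rw [Ideal.map_pow, map_IaQ13]

/-- The induced automorphism of the truncated algebra. -/
def truncEquiv13 (i : ℕ) (ζ : Λ ≃ₗ[ℤ] Λ) : STrunc Λ i ≃+* STrunc Λ i :=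
  Ideal.quotientEquiv _ _ (symEquiv13 ζ : SymQ Λ ≃+* SymQ Λ) (map_IaQpow13 ζ (i + 1)).symm

lemma truncEquiv13_mk (i : ℕ) (ζ : Λ ≃ₗ[ℤ] Λ) (p : SymQ Λ) :
    truncEquiv13 i ζ (trMk Λ i p) = trMk Λ i (symAut13 ζ.toLinearMap p) :=
  Ideal.quotientEquiv_mk _ _ _ _ p

lemma grExp_add13 (a b : Λ) : grExp (a + b) = grExp a * grExp b := by
  simp [grExp, AddMonoidAlgebra.single_mul_single]

lemma grExp_zero13 : grExp (0 : Λ) = 1 := rfl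

lemma grX_dvd13 (lab : Λ) (n : ℤ) (a : Λ) :
    grX lab ∣ grExp (a + n • lab) - grExp a := by
  have hlab : grX lab ∣ grExp lab - 1 := by
    refine ⟨grExp lab, ?_⟩
    rw [grX, sub_mul, one_mul, ← grExp_add13, neg_add_cancel, grExp_zero13]
  have hlab' : grX lab ∣ grExp (-lab) - 1 := by
    refine ⟨-1, ?_⟩
    rw [grX]
    ring
  have key : ∀ m : ℤ, grX lab ∣ grExp (m • lab) - 1 := by
    intro m
    induction m using Int.induction_on with
    | zero => simp [grExp_zero13]
    | succ k ih =>
      have h : grExp (((k : ℤ) + 1) • lab) - 1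
          = grExp ((k : ℤ) • lab) * (grExp lab - 1) + (grExp ((k : ℤ) • lab) - 1) := by
        rw [add_smul, one_smul, grExp_add13]
        ring
      rw [h]
      exact dvd_add (hlab.mul_left _) ih
    | pred k ih =>
      have h : grExp ((-(k : ℤ) - 1) • lab) - 1
          = grExp ((-(k : ℤ)) • lab) * (grExp (-lab) - 1) + (grExp ((-(k : ℤ)) • lab) - 1) := by
        rw [show (-(k : ℤ) - 1) • lab = (-(k : ℤ)) • lab + (-lab) by
          rw [sub_smul, one_smul]; abel, grExp_add13]
        ring
      rw [h]
      exact dvd_add (hlab'.mul_left _) ih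
  have h : grExp (a + n • lab) - grExp a = grExp a * (grExp (n • lab) - 1) := by
    rw [grExp_add13]; ring
  rw [h]
  exact (key n).mul_left _

lemma grSingle13 (a : Λ) (b : ℤ) :
    (AddMonoidAlgebra.single a b : GrpRing Λ) = b • grExp a := by
  simp [grExp]

end Aux13


set_option maxHeartbeats 1000000 in
theorem stmt13 (G : MomentGraph Λ V) (ξ : V → (Λ ≃ₗ[ℤ] Λ)) (hmon : G.Monodromy ξ)
    (i : ℕ) (ch : GrpRing Λ →ₗ[ℤ] STrunc Λ i)
    (hch : ∀ μ : Λ, ch (grExp μ) = texp Λ i μ)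
    (gξ : V → (GrpRing Λ →+* GrpRing Λ))
    (hgξ : ∀ v (μ : Λ), gξ v (grExp μ) = grExp (ξ v μ))
    (sξQ : V → (SymQ Λ →+* SymQ Λ))
    (hsξQ : ∀ v (μ : Λ), sξQ v (iotaQ Λ μ) = iotaQ Λ (ξ v μ)) :
    ∃ tξ : V → (STrunc Λ i ≃+* STrunc Λ i),
      (∀ (v : V) (p : SymQ Λ), tξ v (trMk Λ i p) = trMk Λ i (sξQ v p)) ∧
      (∀ p : STrunc Λ i, (fun v => tξ v p) ∈ G.Zat i) ∧
      (∀ z : GrpRing Λ, (fun v => gξ v z) ∈ G.Zm) ∧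
      (∀ (z : GrpRing Λ) (v : V), tξ v (ch z) = ch (gξ v z)) := by
  classical
  have hs : ∀ (v : V) (p : SymQ Λ), sξQ v p = symAut13 (ξ v).toLinearMap p := by
    intro v
    have h : sξQ v = (symAut13 (ξ v).toLinearMap).toRingHom := by
      apply MvPolynomial.ringHom_ext
      · intro q
        have h1 : (sξQ v).comp (algebraMap ℚ (SymQ Λ)) = algebraMap ℚ (SymQ Λ) :=
          Subsingleton.elim _ _
        have h2 := RingHom.congr_fun h1 q
        simp only [RingHom.comp_apply] at h2
        rw [show (MvPolynomial.C q : SymQ Λ) = algebraMap ℚ (SymQ Λ) q from rfl, h2]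
        exact (symAut13_C _ q).symm
      · intro j
        rw [← iotaQ_basis13 j, hsξQ]
        exact (symAut13_iotaQ _ _).symm
    intro p
    rw [h]
    rfl
  have trMk_surj : Function.Surjective (trMk Λ i) := Ideal.Quotient.mk_surjective
  refine ⟨fun v => truncEquiv13 i (ξ v), ?_, ?_, ?_, ?_⟩
  · intro v p
    rw [truncEquiv13_mk, hs]
  · intro p
    show ∀ ⦃v w⦄, G.E v w → ∃ t, truncEquiv13 i (ξ v) p - truncEquiv13 i (ξ w) p
      = trMk Λ i (iotaQ Λ (G.label v w)) * t
    intro v w hvw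
    obtain ⟨q, rfl⟩ := trMk_surj p
    have hdvd : iotaQ Λ (G.label v w) ∣ sξQ v q - sξQ w q := by
      induction q using MvPolynomial.induction_on with
      | C r =>
        rw [hs, hs, symAut13_C, symAut13_C, sub_self]
        exact dvd_zero _
      | add p q hp hq =>
        have h : sξQ v (p + q) - sξQ w (p + q)
            = (sξQ v p - sξQ w p) + (sξQ v q - sξQ w q) := by
          rw [map_add, map_add]; ring
        rw [h]
        exact dvd_add hp hq
      | mul_X p j hp =>
        obtain ⟨n, hn⟩ := hmon hvw (Module.Free.chooseBasis ℤ Λ j)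
        have hX : sξQ v (MvPolynomial.X j) - sξQ w (MvPolynomial.X j)
            = n • iotaQ Λ (G.label v w) := by
          rw [← iotaQ_basis13 j, hsξQ, hsξQ, ← map_sub, hn, map_zsmul]
        have hd1 : iotaQ Λ (G.label v w) ∣
            sξQ v (MvPolynomial.X j) - sξQ w (MvPolynomial.X j) := by
          rw [hX, zsmul_eq_mul]
          exact Dvd.dvd.mul_left dvd_rfl _
        have heq : sξQ v (p * MvPolynomial.X j) - sξQ w (p * MvPolynomial.X j)
            = sξQ v p * (sξQ v (MvPolynomial.X j) - sξQ w (MvPolynomial.X j))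
              + (sξQ v p - sξQ w p) * sξQ w (MvPolynomial.X j) := by
          rw [map_mul, map_mul]; ring
        rw [heq]
        exact dvd_add (hd1.mul_left _) (hp.mul_right _)
    obtain ⟨t, ht⟩ := hdvd
    refine ⟨trMk Λ i t, ?_⟩
    have h : truncEquiv13 i (ξ v) (trMk Λ i q) - truncEquiv13 i (ξ w) (trMk Λ i q)
        = trMk Λ i (sξQ v q - sξQ w q) := by
      rw [truncEquiv13_mk, truncEquiv13_mk, ← hs, ← hs, map_sub]
    rw [h, ht, map_mul]
  · intro z
    show ∀ ⦃v w⦄, G.E v w → ∃ t, gξ v z - gξ w z = grX (G.label v w) * t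
    intro v w hvw
    suffices h : grX (G.label v w) ∣ gξ v z - gξ w z by
      obtain ⟨t, ht⟩ := h
      exact ⟨t, ht⟩
    induction z using AddMonoidAlgebra.induction with
    | zero => simp
    | single_add a b f haf hb ih =>
      have h : gξ v (AddMonoidAlgebra.single a b + f) - gξ w (AddMonoidAlgebra.single a b + f)
          = (gξ v (AddMonoidAlgebra.single a b) - gξ w (AddMonoidAlgebra.single a b))
            + (gξ v f - gξ w f) := by
        rw [map_add, map_add]; ring
      rw [h]
      refine dvd_add ?_ ih
      rw [grSingle13, map_zsmul, map_zsmul, ← smul_sub, hgξ, hgξ, zsmul_eq_mul]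
      refine Dvd.dvd.mul_left ?_ _
      obtain ⟨n, hn⟩ := hmon hvw a
      have ha' : ξ v a = ξ w a + n • G.label v w := by
        rw [← hn]; abel
      rw [ha']
      exact grX_dvd13 _ n _
  · intro z v
    have hsm : ∀ (q : ℚ) (x : STrunc Λ i),
        truncEquiv13 i (ξ v) (q • x) = q • truncEquiv13 i (ξ v) x := by
      intro q x
      obtain ⟨y, rfl⟩ := trMk_surj x
      have h1 : ∀ (y : SymQ Λ), (q • (trMk Λ i y) : STrunc Λ i) = trMk Λ i (q • y) := by
        intro y
        exact (map_smul (Ideal.Quotient.mkₐ ℚ (IaQ Λ ^ (i + 1))) q y).symm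
      rw [h1, truncEquiv13_mk, map_smul, ← h1, truncEquiv13_mk]
    have htexp : ∀ a : Λ, truncEquiv13 i (ξ v) (texp Λ i a) = texp Λ i (ξ v a) := by
      intro a
      rw [texp, texp, map_sum]
      refine Finset.sum_congr rfl ?_
      intro j hj
      rw [hsm, map_pow, truncEquiv13_mk, symAut13_iotaQ]
      rfl
    induction z using AddMonoidAlgebra.induction with
    | zero => simp
    | single_add a b f haf hb ih =>
      rw [map_add, map_add, map_add, map_add, ih]
      congr 1
      rw [grSingle13, map_smul, map_zsmul, hch, map_zsmul, htexp, map_smul, hgξ, hch]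


end Statements
end
end
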